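/- Let A and B be two m×n matrices with real entries. Then |tr(A^* B)| ≤ (tr(|A||B|))^{1/2} · (tr(|A^*||B^*|))^{1/2}. -/

import Mathlib

open Matrix Polynomial

noncomputable section

/-- Real power of a square real matrix via spectral decomposition (defined for
Hermitian/symmetric matrices; junk value `0` otherwise).  For a positive
semidefinite `A` this is the usual power defined by functional calculus. -/
def matPow {n : ℕ} (A : Matrix (Fin n) (Fin n) ℝ) (r : ℝ) : Matrix (Fin n) (Fin n) ℝ :=
  if hA : A.IsHermitian then
    (hA.eigenvectorUnitary : Matrix (Fin n) (Fin n) ℝ) *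
      Matrix.diagonal (fun i => (hA.eigenvalues i) ^ r) *
      (star hA.eigenvectorUnitary : Matrix.unitaryGroup (Fin n) ℝ)
  else 0

/-- Absolute value `|A| = (A^* A)^{1/2}` of a real rectangular matrix. -/
def matAbs {m n : ℕ} (A : Matrix (Fin m) (Fin n) ℝ) : Matrix (Fin n) (Fin n) ℝ :=
  matPow (Aᴴ * A) (1/2)

/-- Operator (spectral) norm of a matrix acting between Euclidean spaces. -/
def matOpNorm {m n : ℕ} (A : Matrix (Fin m) (Fin n) ℝ) : ℝ :=
  ‖LinearMap.toContinuousLinearMap (Matrix.toEuclideanLin A)‖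


/-- Functional calculus for a Hermitian real matrix. -/
def fCal {n : ℕ} {H : Matrix (Fin n) (Fin n) ℝ} (hH : H.IsHermitian) (f : ℝ → ℝ) :
    Matrix (Fin n) (Fin n) ℝ :=
  (hH.eigenvectorUnitary : Matrix (Fin n) (Fin n) ℝ) *
    Matrix.diagonal (fun i => f (hH.eigenvalues i)) *
    (star (hH.eigenvectorUnitary : Matrix (Fin n) (Fin n) ℝ))

namespace fCal

variable {n : ℕ} {H : Matrix (Fin n) (Fin n) ℝ} (hH : H.IsHermitian) (f g : ℝ → ℝ)

lemma star_mul_self_eigen :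
    star (hH.eigenvectorUnitary : Matrix (Fin n) (Fin n) ℝ) *
      (hH.eigenvectorUnitary : Matrix (Fin n) (Fin n) ℝ) = 1 :=
  (Matrix.mem_unitaryGroup_iff').mp hH.eigenvectorUnitary.2

lemma mul_star_self_eigen :
    (hH.eigenvectorUnitary : Matrix (Fin n) (Fin n) ℝ) *
      star (hH.eigenvectorUnitary : Matrix (Fin n) (Fin n) ℝ) = 1 :=
  (Matrix.mem_unitaryGroup_iff).mp hH.eigenvectorUnitary.2

lemma mul : fCal hH f * fCal hH g = fCal hH (fun x => f x * g x) := by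
  unfold fCal
  set u : Matrix (Fin n) (Fin n) ℝ := (hH.eigenvectorUnitary : Matrix (Fin n) (Fin n) ℝ) with hu
  simp only [Matrix.mul_assoc]
  rw [← Matrix.mul_assoc (star u), star_mul_self_eigen hH, Matrix.one_mul,
    ← Matrix.mul_assoc (Matrix.diagonal _), Matrix.diagonal_mul_diagonal]

lemma congr (h : ∀ i, f (hH.eigenvalues i) = g (hH.eigenvalues i)) :
    fCal hH f = fCal hH g := by
  unfold fCal
  rw [show (fun i => f (hH.eigenvalues i)) = (fun i => g (hH.eigenvalues i)) from funext h]

lemma id_eq : fCal hH (fun x => x) = H := by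
  unfold fCal
  conv_lhs => rw [show (Matrix.diagonal fun i => hH.eigenvalues i)
    = Matrix.diagonal (RCLike.ofReal ∘ hH.eigenvalues) by simp [Function.comp_def]]
  exact hH.spectral_theorem.symm

lemma one_eq : fCal hH (fun _ => 1) = 1 := by
  unfold fCal
  rw [show (Matrix.diagonal fun _ : Fin n => (1:ℝ)) = 1 from Matrix.diagonal_one,
    Matrix.mul_one, mul_star_self_eigen hH]

lemma zero_eq : fCal hH (fun _ => 0) = 0 := by
  unfold fCal
  simp

lemma conjTranspose_eq : (fCal hH f)ᴴ = fCal hH f := by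
  unfold fCal
  simp [Matrix.conjTranspose_mul, Matrix.diagonal_conjTranspose, Matrix.mul_assoc,
    Matrix.star_eq_conjTranspose, Matrix.conjTranspose_conjTranspose]

/-- The conjugation-by-eigenbasis algebra homomorphism. -/
def conjHom : Matrix (Fin n) (Fin n) ℝ →ₐ[ℝ] Matrix (Fin n) (Fin n) ℝ where
  toFun M := (hH.eigenvectorUnitary : Matrix (Fin n) (Fin n) ℝ) * M *
    (star (hH.eigenvectorUnitary : Matrix (Fin n) (Fin n) ℝ))
  map_one' := by
    show (hH.eigenvectorUnitary : Matrix (Fin n) (Fin n) ℝ) * 1 * _ = 1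
    rw [Matrix.mul_one]; exact mul_star_self_eigen hH
  map_mul' M N := by
    show _ * (M * N) * _ = (_ * M * _) * (_ * N * _)
    simp only [Matrix.mul_assoc]
    rw [← Matrix.mul_assoc (star _), star_mul_self_eigen hH, Matrix.one_mul]
  map_zero' := by
    show _ * (0 : Matrix (Fin n) (Fin n) ℝ) * _ = 0
    simp
  map_add' M N := by
    show _ * (M + N) * _ = _ * M * _ + _ * N * _
    rw [Matrix.mul_add, Matrix.add_mul]
  commutes' r := by
    show _ * algebraMap ℝ (Matrix (Fin n) (Fin n) ℝ) r * _ = _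
    simp only [Algebra.algebraMap_eq_smul_one, Matrix.smul_mul, Matrix.mul_smul, Matrix.mul_one]
    rw [mul_star_self_eigen hH]

lemma aeval_diag (p : ℝ[X]) (d : Fin n → ℝ) :
    Polynomial.aeval (Matrix.diagonal d) p = Matrix.diagonal (fun i => p.eval (d i)) := by
  have h := Polynomial.aeval_algHom_apply (Matrix.diagonalAlgHom (n := Fin n) (α := ℝ) ℝ) d p
  simp only [Matrix.diagonalAlgHom_apply] at h
  rw [h, Matrix.diagonal_eq_diagonal_iff]
  intro i
  have h2 := Polynomial.aeval_algHom_apply (Pi.evalAlgHom ℝ (fun _ : Fin n => ℝ) i) d p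
  have h3 : Pi.evalAlgHom ℝ (fun _ : Fin n => ℝ) i (Polynomial.aeval d p)
      = (Polynomial.aeval d p) i := rfl
  rw [h3] at h2
  rw [← h2]
  exact (congrFun (Polynomial.coe_aeval_eq_eval (d i)) p).symm

lemma aeval_eq (p : ℝ[X]) : Polynomial.aeval H p = fCal hH (fun x => p.eval x) := by
  have h1 : H = conjHom hH (Matrix.diagonal hH.eigenvalues) := by
    have := id_eq hH
    unfold fCal at this
    exact this.symm
  conv_lhs => rw [h1]
  rw [Polynomial.aeval_algHom_apply, aeval_diag]
  rfl

end fCal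

section intertwine

variable {m n : ℕ} (A : Matrix (Fin m) (Fin n) ℝ)

lemma pow_intertwine (k : ℕ) : A * (Aᴴ * A) ^ k = (A * Aᴴ) ^ k * A := by
  induction k with
  | zero => simp
  | succ k ih =>
    rw [pow_succ, pow_succ, ← Matrix.mul_assoc, ih]
    rw [Matrix.mul_assoc, Matrix.mul_assoc, Matrix.mul_assoc]

lemma aeval_intertwine (p : ℝ[X]) :
    A * Polynomial.aeval (Aᴴ * A) p = Polynomial.aeval (A * Aᴴ) p * A := by
  induction p using Polynomial.induction_on' with
  | add p q hp hq => rw [map_add, map_add, Matrix.mul_add, Matrix.add_mul, hp, hq]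
  | monomial k a =>
    simp only [Polynomial.aeval_monomial, Algebra.algebraMap_eq_smul_one, Matrix.smul_mul,
      Matrix.mul_smul, smul_mul_assoc, one_mul]
    rw [pow_intertwine]

lemma fCal_intertwine (f : ℝ → ℝ) :
    A * fCal (Matrix.isHermitian_conjTranspose_mul_self A) f
      = fCal (Matrix.isHermitian_mul_conjTranspose_self A) f * A := by
  set h1 := Matrix.isHermitian_conjTranspose_mul_self A
  set h2 := Matrix.isHermitian_mul_conjTranspose_self A
  set s : Finset ℝ := (Finset.univ.image h1.eigenvalues) ∪ (Finset.univ.image h2.eigenvalues)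
    with hs
  set p : ℝ[X] := Lagrange.interpolate s id f with hp
  have hinj : Set.InjOn (id : ℝ → ℝ) s := fun x _ y _ h => h
  have hnode : ∀ x ∈ s, p.eval x = f x := fun x hx => by
    exact Lagrange.eval_interpolate_at_node (r := f) hinj hx
  have e1 : fCal h1 f = fCal h1 (fun x => p.eval x) := by
    refine (fCal.congr h1 _ _ fun i => (hnode _ ?_).symm)
    exact Finset.mem_union_left _ (Finset.mem_image_of_mem _ (Finset.mem_univ i))
  have e2 : fCal h2 f = fCal h2 (fun x => p.eval x) := by
    refine (fCal.congr h2 _ _ fun i => (hnode _ ?_).symm)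
    exact Finset.mem_union_right _ (Finset.mem_image_of_mem _ (Finset.mem_univ i))
  rw [e1, e2, ← fCal.aeval_eq, ← fCal.aeval_eq, aeval_intertwine]

end intertwine

section support

variable {m n : ℕ} (A : Matrix (Fin m) (Fin n) ℝ)

lemma fCal.sub {n : ℕ} {H : Matrix (Fin n) (Fin n) ℝ} (hH : H.IsHermitian) (f g : ℝ → ℝ) :
    fCal hH (fun x => f x - g x) = fCal hH f - fCal hH g := by
  unfold fCal
  rw [show (Matrix.diagonal fun i => f (hH.eigenvalues i) - g (hH.eigenvalues i))
      = Matrix.diagonal (fun i => f (hH.eigenvalues i))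
        - Matrix.diagonal (fun i => g (hH.eigenvalues i)) from (Matrix.diagonal_sub _ _).symm,
    Matrix.mul_sub, Matrix.sub_mul]

lemma fCal.mul_assoc' {n k : ℕ} {H : Matrix (Fin n) (Fin n) ℝ} (hH : H.IsHermitian) (f g : ℝ → ℝ)
    (Z : Matrix (Fin n) (Fin k) ℝ) :
    fCal hH f * (fCal hH g * Z) = fCal hH (fun x => f x * g x) * Z := by
  rw [← Matrix.mul_assoc, fCal.mul]

lemma mul_fCal_eq_zero (f : ℝ → ℝ)
    (hf : ∀ i, f ((Matrix.isHermitian_conjTranspose_mul_self A).eigenvalues i) *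
        ((Matrix.isHermitian_conjTranspose_mul_self A).eigenvalues i *
        f ((Matrix.isHermitian_conjTranspose_mul_self A).eigenvalues i)) = 0) :
    A * fCal (Matrix.isHermitian_conjTranspose_mul_self A) f = 0 := by
  have h1 := Matrix.isHermitian_conjTranspose_mul_self A
  set F := fCal (Matrix.isHermitian_conjTranspose_mul_self A) f with hF
  have key : (A * F)ᴴ * (A * F) = 0 := by
    have e1 : (A * F)ᴴ * (A * F) = F * ((Aᴴ * A) * F) := by
      rw [Matrix.conjTranspose_mul, hF, fCal.conjTranspose_eq]
      simp only [Matrix.mul_assoc]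
    have e2 : (Aᴴ * A) * F = fCal (Matrix.isHermitian_conjTranspose_mul_self A)
        (fun x => x * f x) := by
      rw [hF, ← fCal.mul (Matrix.isHermitian_conjTranspose_mul_self A) (fun x => x) f,
        fCal.id_eq]
    rw [e1, e2, hF, fCal.mul]
    rw [fCal.congr (Matrix.isHermitian_conjTranspose_mul_self A) _ (fun _ => 0) (fun i => hf i),
      fCal.zero_eq]
  exact Matrix.conjTranspose_mul_self_eq_zero.mp key

lemma mul_fCal_eq_self (f : ℝ → ℝ)
    (hf : ∀ i, (Matrix.isHermitian_conjTranspose_mul_self A).eigenvalues i = 0 ∨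
        f ((Matrix.isHermitian_conjTranspose_mul_self A).eigenvalues i) = 1) :
    A * fCal (Matrix.isHermitian_conjTranspose_mul_self A) f = A := by
  have h0 : A * fCal (Matrix.isHermitian_conjTranspose_mul_self A) (fun x => f x - 1) = 0 := by
    refine mul_fCal_eq_zero A _ fun i => ?_
    rcases hf i with h | h
    · rw [h]; ring
    · rw [h]; ring
  rw [fCal.sub, fCal.one_eq, Matrix.mul_sub, Matrix.mul_one, sub_eq_zero] at h0
  exact h0

lemma fCal_intertwine' {k : ℕ} (f : ℝ → ℝ) (Z : Matrix (Fin n) (Fin k) ℝ) :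
    A * (fCal (Matrix.isHermitian_conjTranspose_mul_self A) f * Z)
      = fCal (Matrix.isHermitian_mul_conjTranspose_self A) f * (A * Z) := by
  rw [← Matrix.mul_assoc, fCal_intertwine, Matrix.mul_assoc]

lemma self_mul_ct' {k : ℕ} (Z : Matrix (Fin m) (Fin k) ℝ) :
    A * (Aᴴ * Z) = fCal (Matrix.isHermitian_mul_conjTranspose_self A) (fun x => x) * Z := by
  rw [← Matrix.mul_assoc, fCal.id_eq]

end support

section matAbsLemmas

lemma matAbs_eq {m n : ℕ} (A : Matrix (Fin m) (Fin n) ℝ) :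
    matAbs A = fCal (Matrix.isHermitian_conjTranspose_mul_self A) (fun x => x ^ ((1:ℝ)/2)) := by
  unfold matAbs matPow
  rw [dif_pos (Matrix.isHermitian_conjTranspose_mul_self A)]
  rfl

lemma matAbs_ct_eq {m n : ℕ} (A : Matrix (Fin m) (Fin n) ℝ) :
    matAbs Aᴴ = fCal (Matrix.isHermitian_mul_conjTranspose_self A) (fun x => x ^ ((1:ℝ)/2)) := by
  have h : matAbs Aᴴ = matPow (A * Aᴴ) ((1:ℝ)/2) := by
    unfold matAbs
    rw [Matrix.conjTranspose_conjTranspose]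
  rw [h]
  unfold matPow
  rw [dif_pos (Matrix.isHermitian_mul_conjTranspose_self A)]
  rfl

end matAbsLemmas

section scalar

lemma pow_q_mul_q' {x : ℝ} (hx : 0 ≤ x) :
    x = 0 ∨ x ^ ((1:ℝ)/4) * x ^ (-((1:ℝ)/4)) = 1 := by
  rcases eq_or_lt_of_le hx with h | h
  · exact Or.inl h.symm
  · right; rw [← Real.rpow_add h]; norm_num

lemma pow_q'_mul_q {x : ℝ} (hx : 0 ≤ x) :
    x = 0 ∨ x ^ (-((1:ℝ)/4)) * x ^ ((1:ℝ)/4) = 1 := by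
  rcases eq_or_lt_of_le hx with h | h
  · exact Or.inl h.symm
  · right; rw [← Real.rpow_add h]; norm_num

lemma pow_q_mul_q {x : ℝ} (hx : 0 ≤ x) :
    x ^ ((1:ℝ)/4) * x ^ ((1:ℝ)/4) = x ^ ((1:ℝ)/2) := by
  rcases eq_or_lt_of_le hx with h | h
  · rw [← h]; norm_num [Real.zero_rpow]
  · rw [← Real.rpow_add h]; norm_num

lemma pow_q'q'id {x : ℝ} (hx : 0 ≤ x) :
    x ^ (-((1:ℝ)/4)) * x ^ (-((1:ℝ)/4)) * x = x ^ ((1:ℝ)/2) := by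
  rcases eq_or_lt_of_le hx with h | h
  · rw [← h]; norm_num [Real.zero_rpow]
  · calc x ^ (-((1:ℝ)/4)) * x ^ (-((1:ℝ)/4)) * x
        = x ^ (-((1:ℝ)/4)) * x ^ (-((1:ℝ)/4)) * x ^ (1:ℝ) := by rw [Real.rpow_one]
      _ = x ^ ((1:ℝ)/2) := by rw [← Real.rpow_add h, ← Real.rpow_add h]; norm_num

end scalar

section traceCS

lemma trace_ct_mul {n : ℕ} (M N : Matrix (Fin n) (Fin n) ℝ) :
    Matrix.trace (Mᴴ * N) = ∑ p : Fin n × Fin n, M p.1 p.2 * N p.1 p.2 := by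
  rw [Fintype.sum_prod_type, Matrix.trace]
  simp only [Matrix.diag, Matrix.mul_apply, Matrix.conjTranspose_apply, star_trivial]
  rw [Finset.sum_comm]

lemma trace_cs {n : ℕ} (X Y : Matrix (Fin n) (Fin n) ℝ) :
    |Matrix.trace (Xᴴ * Y)| ≤
      Real.sqrt (Matrix.trace (Xᴴ * X)) * Real.sqrt (Matrix.trace (Yᴴ * Y)) := by
  rw [trace_ct_mul, trace_ct_mul, trace_ct_mul]
  have h := Finset.sum_mul_sq_le_sq_mul_sq Finset.univ
    (fun p : Fin n × Fin n => X p.1 p.2) (fun p : Fin n × Fin n => Y p.1 p.2)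
  have hx : (∑ p : Fin n × Fin n, X p.1 p.2 * X p.1 p.2)
      = ∑ p : Fin n × Fin n, X p.1 p.2 ^ 2 := by simp [sq]
  have hy : (∑ p : Fin n × Fin n, Y p.1 p.2 * Y p.1 p.2)
      = ∑ p : Fin n × Fin n, Y p.1 p.2 ^ 2 := by simp [sq]
  rw [hx, hy]
  calc |∑ p : Fin n × Fin n, X p.1 p.2 * Y p.1 p.2|
      = Real.sqrt ((∑ p : Fin n × Fin n, X p.1 p.2 * Y p.1 p.2) ^ 2) :=
        (Real.sqrt_sq_eq_abs _).symm
    _ ≤ Real.sqrt ((∑ p : Fin n × Fin n, X p.1 p.2 ^ 2) *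
          (∑ p : Fin n × Fin n, Y p.1 p.2 ^ 2)) := Real.sqrt_le_sqrt h
    _ = _ := Real.sqrt_mul (by positivity) _

end traceCS


/-- **Matrix Cauchy–Schwarz inequality** (Theorem 2.1):
for real $m×n$ matrices $A, B$,
$|tr(A^*B)| ≤ (tr(|A||B|))^{1/2} (tr(|A^*||B^*|))^{1/2}$. -/
theorem matrix_cauchy_schwarz_trace {m n : ℕ} (A B : Matrix (Fin m) (Fin n) ℝ) :
    |Matrix.trace (Aᴴ * B)| ≤
      (Matrix.trace (matAbs A * matAbs B)) ^ ((1 : ℝ)/2) *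
        (Matrix.trace (matAbs Aᴴ * matAbs Bᴴ)) ^ ((1 : ℝ)/2) := by
  have hevA1 : ∀ i, 0 ≤ (Matrix.isHermitian_conjTranspose_mul_self A).eigenvalues i :=
    fun i => (Matrix.posSemidef_conjTranspose_mul_self A).eigenvalues_nonneg i
  have hevA2 : ∀ i, 0 ≤ (Matrix.isHermitian_mul_conjTranspose_self A).eigenvalues i :=
    fun i => (Matrix.posSemidef_self_mul_conjTranspose A).eigenvalues_nonneg i
  have hevB1 : ∀ i, 0 ≤ (Matrix.isHermitian_conjTranspose_mul_self B).eigenvalues i :=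
    fun i => (Matrix.posSemidef_conjTranspose_mul_self B).eigenvalues_nonneg i
  have hevB2 : ∀ i, 0 ≤ (Matrix.isHermitian_mul_conjTranspose_self B).eigenvalues i :=
    fun i => (Matrix.posSemidef_self_mul_conjTranspose B).eigenvalues_nonneg i
  set fq : ℝ → ℝ := fun x => x ^ ((1:ℝ)/4) with hfq
  set fq' : ℝ → ℝ := fun x => x ^ (-((1:ℝ)/4)) with hfq'
  set half : ℝ → ℝ := fun x => x ^ ((1:ℝ)/2) with hhalf
  -- support facts
  have FA : ∀ {k : ℕ} (Z : Matrix (Fin m) (Fin k) ℝ),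
      fCal (Matrix.isHermitian_conjTranspose_mul_self A) (fun x => fq x * fq' x) * (Aᴴ * Z)
        = Aᴴ * Z := by
    intro k Z
    have h0 : A * fCal (Matrix.isHermitian_conjTranspose_mul_self A) (fun x => fq x * fq' x) = A :=
      mul_fCal_eq_self A _ (fun i => pow_q_mul_q' (hevA1 i))
    have h1 : fCal (Matrix.isHermitian_conjTranspose_mul_self A) (fun x => fq x * fq' x) * Aᴴ
        = Aᴴ := by
      have h2 := congrArg Matrix.conjTranspose h0
      rw [Matrix.conjTranspose_mul, fCal.conjTranspose_eq] at h2
      exact h2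
    rw [← Matrix.mul_assoc, h1]
  have FB : B * fCal (Matrix.isHermitian_conjTranspose_mul_self B) (fun x => fq' x * fq x) = B :=
    mul_fCal_eq_self B _ (fun i => pow_q'_mul_q (hevB1 i))
  set X := fCal (Matrix.isHermitian_conjTranspose_mul_self A) fq *
      fCal (Matrix.isHermitian_conjTranspose_mul_self B) fq with hX
  set Y := fCal (Matrix.isHermitian_conjTranspose_mul_self A) fq' *
      (Aᴴ * (B * fCal (Matrix.isHermitian_conjTranspose_mul_self B) fq')) with hY
  have hXt : Xᴴ = fCal (Matrix.isHermitian_conjTranspose_mul_self B) fq *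
      fCal (Matrix.isHermitian_conjTranspose_mul_self A) fq := by
    rw [hX, Matrix.conjTranspose_mul, fCal.conjTranspose_eq, fCal.conjTranspose_eq]
  have hYt : Yᴴ = fCal (Matrix.isHermitian_conjTranspose_mul_self B) fq' *
      (Bᴴ * (A * fCal (Matrix.isHermitian_conjTranspose_mul_self A) fq')) := by
    rw [hY]
    simp only [Matrix.conjTranspose_mul, Matrix.conjTranspose_conjTranspose,
      fCal.conjTranspose_eq, Matrix.mul_assoc]
  have t1 : Matrix.trace (Xᴴ * Y) = Matrix.trace (Aᴴ * B) := by
    rw [hXt, hY]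
    simp only [Matrix.mul_assoc]
    rw [fCal.mul_assoc' (Matrix.isHermitian_conjTranspose_mul_self A) fq fq', FA]
    rw [Matrix.trace_mul_comm]
    simp only [Matrix.mul_assoc]
    rw [fCal.mul (Matrix.isHermitian_conjTranspose_mul_self B) fq' fq, FB]
  have t2 : Matrix.trace (Xᴴ * X) = Matrix.trace (matAbs A * matAbs B) := by
    rw [hXt, hX]
    simp only [Matrix.mul_assoc]
    rw [fCal.mul_assoc' (Matrix.isHermitian_conjTranspose_mul_self A) fq fq,
      fCal.congr (Matrix.isHermitian_conjTranspose_mul_self A) _ half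
        (fun i => pow_q_mul_q (hevA1 i))]
    rw [Matrix.trace_mul_comm]
    simp only [Matrix.mul_assoc]
    rw [fCal.mul (Matrix.isHermitian_conjTranspose_mul_self B) fq fq,
      fCal.congr (Matrix.isHermitian_conjTranspose_mul_self B) _ half
        (fun i => pow_q_mul_q (hevB1 i))]
    rw [matAbs_eq A, matAbs_eq B]
  have t3 : Matrix.trace (Yᴴ * Y) = Matrix.trace (matAbs Aᴴ * matAbs Bᴴ) := by
    rw [hYt, hY]
    simp only [Matrix.mul_assoc]
    rw [fCal.mul_assoc' (Matrix.isHermitian_conjTranspose_mul_self A) fq' fq']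
    rw [fCal_intertwine' A (fun x => fq' x * fq' x)]
    rw [self_mul_ct' A]
    rw [fCal.mul_assoc' (Matrix.isHermitian_mul_conjTranspose_self A)
      (fun x => fq' x * fq' x) (fun x => x)]
    rw [fCal.congr (Matrix.isHermitian_mul_conjTranspose_self A) _ half
      (fun i => pow_q'q'id (hevA2 i))]
    rw [Matrix.trace_mul_comm]
    simp only [Matrix.mul_assoc]
    rw [Matrix.trace_mul_comm]
    simp only [Matrix.mul_assoc]
    rw [fCal.mul_assoc' (Matrix.isHermitian_conjTranspose_mul_self B) fq' fq' Bᴴ]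
    rw [fCal_intertwine' B (fun x => fq' x * fq' x)]
    have e : fCal (Matrix.isHermitian_mul_conjTranspose_self B) (fun x => fq' x * fq' x) *
        (B * Bᴴ) = fCal (Matrix.isHermitian_mul_conjTranspose_self B)
          (fun x => (fq' x * fq' x) * x) := by
      rw [← fCal.mul (Matrix.isHermitian_mul_conjTranspose_self B)
        (fun x => fq' x * fq' x) (fun x => x), fCal.id_eq]
    rw [e]
    rw [fCal.congr (Matrix.isHermitian_mul_conjTranspose_self B) _ half
      (fun i => pow_q'q'id (hevB2 i))]
    rw [matAbs_ct_eq A, matAbs_ct_eq B]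
  have key := trace_cs X Y
  rw [t1, t2, t3, Real.sqrt_eq_rpow, Real.sqrt_eq_rpow] at key
  exact key
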